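/- Let Λ be an abelian group with a translation-invariant partial order all of whose intervals [λ, μ] are finite, let Λ₊ ⊆ Λ be a subset, and let λ ↦ X^λ be a bijection from Λ₊ onto the set of (R,R)-double cosets contained in Γ₊. Assume (SH1): for all λ, μ ∈ Λ₊ and z ∈ Γ₊ the set R\((X^λ)⁻¹z ∩ X^μ) is finite; and (SH2): for all λ, μ ∈ Λ₊, the product set X^λ·X^μ is contained in the union of the X^ν over ν ∈ Λ₊ with ν ≤ λ + μ. Then for any two R-bi-invariant functions f₁, f₂: Γ₊ → ℂ with semi-infinite support and each z ∈ Γ₊, only finitely many right cosets aR with a ∈ Γ₊ and a⁻¹z ∈ Γ₊ give a nonzero summand f₁(a)·f₂(a⁻¹z); moreover the resulting convolution f₁ ⋆ f₂ is R-bi-invariant, and if the supports of f₁ and f₂ are contained in ∪ᵢ {μ ≤ λᵢ} and ∪ⱼ {μ ≤ λ′ⱼ} respectively, then the support of f₁ ⋆ f₂ is contained in ∪_{i,j} {ν ∈ Λ₊ : ν ≤ λᵢ + λ′ⱼ}. -/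

import Mathlib

open scoped Pointwise

namespace Stmt4

variable {Γ : Type*} [Group Γ]

/-- The orbit set `R\S` of left multiplication by the subgroup `R` on a subset `S ⊆ Γ`. -/
def leftOrbits (R : Subgroup Γ) (S : Set Γ) : Set (Set Γ) :=
  {C | ∃ g ∈ S, C = (R : Set Γ) * {g}}

/-- `A⁻¹x = {a⁻¹ · x : a ∈ A}`. -/
def invMul (A : Set Γ) (x : Γ) : Set Γ := (fun a => a⁻¹ * x) '' A

/-- Convolution: `(f ⋆ g)(z) = Σ f(a)·g(a⁻¹z)`, the sum running over the cosets `aR`. -/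
noncomputable def conv (R : Subgroup Γ) (f g : Γ → ℂ) : Γ → ℂ :=
  fun z => ∑ᶠ c : Γ ⧸ R, f (Quotient.out c) * g ((Quotient.out c)⁻¹ * z)

end Stmt4

open Stmt4 in
/-- Semi-infinite convolution: under (SH1), (SH2) and finiteness of order-intervals in the
ordered abelian group `Λ` indexing the `(R,R)`-double cosets of `Γ₊`, the convolution of two
`R`-bi-invariant, semi-infinitely supported functions is well defined (finitely many cosets
contribute at each point of `Γ₊`), is `R`-bi-invariant, and its support is controlled by
the sums of the bounds for the supports of the two factors. -/
theorem stmt4 {Γ : Type*} [Group Γ] {Λ : Type*} [AddCommGroup Λ] [PartialOrder Λ]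
    (hcov : ∀ a b c : Λ, a ≤ b → a + c ≤ b + c)
    (hint : ∀ a b : Λ, (Set.Icc a b).Finite)
    (Γp : Subsemigroup Γ) (R : Subgroup Γ) (hR : (R : Set Γ) ⊆ (Γp : Set Γ))
    (Λp : Set Λ) (X : Λ → Set Γ)
    (hXdc : ∀ lam ∈ Λp, ∃ a ∈ Γp, X lam = DoubleCoset.doubleCoset a (R : Set Γ) (R : Set Γ))
    (hXinj : ∀ lam ∈ Λp, ∀ mu ∈ Λp, X lam = X mu → lam = mu)
    (hXsurj : ∀ a ∈ Γp, ∃ lam ∈ Λp, X lam = DoubleCoset.doubleCoset a (R : Set Γ) (R : Set Γ))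
    (SH1 : ∀ lam ∈ Λp, ∀ mu ∈ Λp, ∀ z ∈ Γp,
      (leftOrbits R (invMul (X lam) z ∩ X mu)).Finite)
    (SH2 : ∀ lam ∈ Λp, ∀ mu ∈ Λp,
      X lam * X mu ⊆ ⋃ nu ∈ {nu | nu ∈ Λp ∧ nu ≤ lam + mu}, X nu) :
    ∀ f₁ f₂ : Γ → ℂ,
      (∀ g, f₁ g ≠ 0 → g ∈ Γp) → (∀ g, f₂ g ≠ 0 → g ∈ Γp) →
      (∀ r ∈ R, ∀ r' ∈ R, ∀ g, f₁ (r * g * r') = f₁ g) →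
      (∀ r ∈ R, ∀ r' ∈ R, ∀ g, f₂ (r * g * r') = f₂ g) →
      (∃ F : Finset Λ, ∀ g, f₁ g ≠ 0 → ∃ lam ∈ Λp, g ∈ X lam ∧ ∃ mu ∈ F, lam ≤ mu) →
      (∃ F : Finset Λ, ∀ g, f₂ g ≠ 0 → ∃ lam ∈ Λp, g ∈ X lam ∧ ∃ mu ∈ F, lam ≤ mu) →
      (∀ z ∈ Γp, (Function.support
          (fun c : Γ ⧸ R => f₁ (Quotient.out c) * f₂ ((Quotient.out c)⁻¹ * z))).Finite) ∧
      (∀ r ∈ R, ∀ r' ∈ R, ∀ g, conv R f₁ f₂ (r * g * r') = conv R f₁ f₂ g) ∧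
      (∀ F₁ F₂ : Finset Λ,
        (∀ g, f₁ g ≠ 0 → ∃ lam ∈ Λp, g ∈ X lam ∧ ∃ mu ∈ F₁, lam ≤ mu) →
        (∀ g, f₂ g ≠ 0 → ∃ lam ∈ Λp, g ∈ X lam ∧ ∃ mu ∈ F₂, lam ≤ mu) →
        ∀ g, conv R f₁ f₂ g ≠ 0 →
          ∃ nu ∈ Λp, g ∈ X nu ∧ ∃ mu₁ ∈ F₁, ∃ mu₂ ∈ F₂, nu ≤ mu₁ + mu₂) := by
  intro f₁ f₂ hs₁ hs₂ hbi₁ hbi₂ hsi₁ hsi₂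
  haveI : IsOrderedAddMonoid Λ :=
    { add_le_add_left := fun a b h c => by simpa [add_comm] using hcov a b c h }
  -- the summand is well defined on cosets
  have key : ∀ (z b : Γ) (c : Γ ⧸ R), QuotientGroup.mk b = c →
      f₁ (Quotient.out c) * f₂ ((Quotient.out c)⁻¹ * z) = f₁ b * f₂ (b⁻¹ * z) := by
    intro z b c hb
    have hr : b⁻¹ * Quotient.out c ∈ R := by
      refine QuotientGroup.eq.mp ?_
      rw [hb, QuotientGroup.out_eq']
    have hout : Quotient.out c = b * (b⁻¹ * Quotient.out c) := by group
    rw [hout]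
    set r := b⁻¹ * Quotient.out c with hrdef
    have h1 : f₁ (b * r) = f₁ b := by
      have := hbi₁ 1 R.one_mem r hr b; simpa using this
    have h2 : f₂ ((b * r)⁻¹ * z) = f₂ (b⁻¹ * z) := by
      have := hbi₂ r⁻¹ (R.inv_mem hr) 1 R.one_mem (b⁻¹ * z)
      simpa [mul_assoc] using this
    rw [h1, h2]
  -- if a summand is nonzero, parameters exist
  have decomp : ∀ (z : Γ) (c : Γ ⧸ R),
      f₁ (Quotient.out c) * f₂ ((Quotient.out c)⁻¹ * z) ≠ 0 →
      f₁ (Quotient.out c) ≠ 0 ∧ f₂ ((Quotient.out c)⁻¹ * z) ≠ 0 := by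
    intro z c h
    constructor
    · intro h1; exact h (by rw [h1, zero_mul])
    · intro h2; exact h (by rw [h2, mul_zero])
  -- pieces are finite (via SH1)
  have hpiece : ∀ lam ∈ Λp, ∀ mu ∈ Λp, ∀ z ∈ Γp,
      ({c : Γ ⧸ R | Quotient.out c ∈ X lam ∧ (Quotient.out c)⁻¹ * z ∈ X mu}).Finite := by
    intro lam hlam mu hmu z hz
    have hfin := SH1 lam hlam mu hmu z hz
    apply Set.Finite.of_finite_image
      (f := fun c : Γ ⧸ R => (R : Set Γ) * {(Quotient.out c)⁻¹ * z})
    · refine hfin.subset ?_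
      rintro C ⟨c, ⟨hc1, hc2⟩, rfl⟩
      exact ⟨(Quotient.out c)⁻¹ * z, ⟨⟨Quotient.out c, hc1, rfl⟩, hc2⟩, rfl⟩
    · intro c hc c' hc' heq
      dsimp only at heq
      have hmem : (Quotient.out c)⁻¹ * z ∈ (R : Set Γ) * {(Quotient.out c')⁻¹ * z} := by
        rw [← heq]
        exact ⟨1, R.one_mem, (Quotient.out c)⁻¹ * z, rfl, one_mul _⟩
      obtain ⟨r, hrR, y, hy, hry⟩ := hmem
      rw [Set.mem_singleton_iff] at hy
      subst hy
      dsimp only at hry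
      have hout : (Quotient.out c')⁻¹ * Quotient.out c = r⁻¹ := by
        have h3 : (Quotient.out c)⁻¹ = r * (Quotient.out c')⁻¹ :=
          mul_right_cancel (b := z) (by rw [mul_assoc]; exact hry.symm)
        have := congrArg Inv.inv h3
        rw [inv_inv, mul_inv_rev, inv_inv] at this
        rw [this]; group
      have : (QuotientGroup.mk (Quotient.out c') : Γ ⧸ R) = QuotientGroup.mk (Quotient.out c) :=
        QuotientGroup.eq.mpr (hout ▸ R.inv_mem hrR)
      rw [QuotientGroup.out_eq', QuotientGroup.out_eq'] at this
      exact this.symm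
  -- nonzero summand at z ∈ Γp forces the double coset parameters into intervals
  have finsupp : ∀ z ∈ Γp, (Function.support
      (fun c : Γ ⧸ R => f₁ (Quotient.out c) * f₂ ((Quotient.out c)⁻¹ * z))).Finite := by
    intro z hz
    obtain ⟨F₁, hF₁⟩ := hsi₁
    obtain ⟨F₂, hF₂⟩ := hsi₂
    obtain ⟨ν₀, hν₀Λ, hν₀⟩ := hXsurj z hz
    have hL : (⋃ m₁ ∈ F₁, ⋃ m₂ ∈ F₂, Set.Icc (ν₀ - m₂) m₁).Finite :=
      Set.Finite.biUnion F₁.finite_toSet fun m₁ _ =>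
        Set.Finite.biUnion F₂.finite_toSet fun m₂ _ => hint _ _
    have hM : (⋃ m₁ ∈ F₁, ⋃ m₂ ∈ F₂, Set.Icc (ν₀ - m₁) m₂).Finite :=
      Set.Finite.biUnion F₁.finite_toSet fun m₁ _ =>
        Set.Finite.biUnion F₂.finite_toSet fun m₂ _ => hint _ _
    refine Set.Finite.subset
      (Set.Finite.biUnion (hL.inter_of_left Λp) fun lam hlam =>
        Set.Finite.biUnion (hM.inter_of_left Λp) fun mu hmu =>
          hpiece lam hlam.2 mu hmu.2 z hz) ?_
    intro c hc
    have hc' := decomp z c hc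
    obtain ⟨lam, hlamΛ, hmem1, m₁, hm₁, hle₁⟩ := hF₁ _ hc'.1
    obtain ⟨mu, hmuΛ, hmem2, m₂, hm₂, hle₂⟩ := hF₂ _ hc'.2
    -- z lies in X ν for some ν ≤ lam + mu, and this ν must be ν₀
    have hzmem : z ∈ X lam * X mu := by
      have := Set.mul_mem_mul hmem1 hmem2
      simpa using this
    obtain ⟨ν, hν, hzν⟩ := Set.mem_iUnion₂.mp (SH2 lam hlamΛ mu hmuΛ hzmem)
    obtain ⟨b, hb, hXν⟩ := hXdc ν hν.1
    have hdos : X ν = X ν₀ := by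
      rw [hXν, hν₀]
      exact DoubleCoset.doubleCoset_eq_of_mem (by rw [← hXν]; exact hzν) ▸ rfl
    have hνν₀ : ν = ν₀ := hXinj ν hν.1 ν₀ hν₀Λ hdos
    have hbound : ν₀ ≤ lam + mu := hνν₀ ▸ hν.2
    have hlamIcc : lam ∈ Set.Icc (ν₀ - m₂) m₁ :=
      ⟨sub_le_iff_le_add.mpr (le_trans hbound (add_le_add_right hle₂ lam)), hle₁⟩
    have hmuIcc : mu ∈ Set.Icc (ν₀ - m₁) m₂ :=
      ⟨sub_le_iff_le_add.mpr (le_trans hbound (by rw [add_comm]; exact add_le_add_right hle₁ mu)),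
        hle₂⟩
    refine Set.mem_biUnion (s := (_ : Set Λ)) ?_ ?_
      (x := lam)
    · exact ⟨Set.mem_biUnion hm₁ (Set.mem_biUnion hm₂ hlamIcc), hlamΛ⟩
    · exact Set.mem_biUnion ⟨Set.mem_biUnion hm₁ (Set.mem_biUnion hm₂ hmuIcc), hmuΛ⟩
        ⟨hmem1, hmem2⟩
  refine ⟨finsupp, ?_, ?_⟩
  · -- bi-invariance of the convolution
    intro r hr r' hr' g
    unfold conv
    have step1 : ∀ c : Γ ⧸ R,
        f₁ (Quotient.out c) * f₂ ((Quotient.out c)⁻¹ * (r * g * r')) =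
        f₁ (Quotient.out c) * f₂ ((Quotient.out c)⁻¹ * (r * g)) := by
      intro c
      congr 1
      have := hbi₂ 1 R.one_mem r' hr' ((Quotient.out c)⁻¹ * (r * g))
      simpa [mul_assoc] using this
    calc (∑ᶠ c : Γ ⧸ R, f₁ (Quotient.out c) * f₂ ((Quotient.out c)⁻¹ * (r * g * r')))
        = ∑ᶠ c : Γ ⧸ R, f₁ (Quotient.out c) * f₂ ((Quotient.out c)⁻¹ * (r * g)) := by
          exact finsum_congr step1
      _ = ∑ᶠ c : Γ ⧸ R, f₁ (Quotient.out (r • c)) * f₂ ((Quotient.out (r • c))⁻¹ * (r * g)) :=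
          (finsum_comp_equiv (MulAction.toPerm r)).symm
      _ = ∑ᶠ c : Γ ⧸ R, f₁ (Quotient.out c) * f₂ ((Quotient.out c)⁻¹ * g) := by
          refine finsum_congr fun c => ?_
          have hmk : QuotientGroup.mk (r * Quotient.out c) = r • c := by
            rw [← MulAction.Quotient.coe_smul_out R r c]; rfl
          rw [key (r * g) (r * Quotient.out c) (r • c) hmk]
          have h1 : f₁ (r * Quotient.out c) = f₁ (Quotient.out c) := by
            have := hbi₁ r hr 1 R.one_mem (Quotient.out c)
            simpa using this
          have h2 : (r * Quotient.out c)⁻¹ * (r * g) = (Quotient.out c)⁻¹ * g := by group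
          rw [h1, h2]
  · -- support of the convolution
    intro F₁ F₂ hF₁ hF₂ g hg
    unfold conv at hg
    have hex : ∃ c : Γ ⧸ R, f₁ (Quotient.out c) * f₂ ((Quotient.out c)⁻¹ * g) ≠ 0 := by
      by_contra h
      push_neg at h
      exact hg (finsum_eq_zero_of_forall_eq_zero h)
    obtain ⟨c, hc⟩ := hex
    have hc' := decomp g c hc
    obtain ⟨lam, hlamΛ, hmem1, m₁, hm₁, hle₁⟩ := hF₁ _ hc'.1
    obtain ⟨mu, hmuΛ, hmem2, m₂, hm₂, hle₂⟩ := hF₂ _ hc'.2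
    have hgmem : g ∈ X lam * X mu := by
      have := Set.mul_mem_mul hmem1 hmem2
      simpa using this
    obtain ⟨ν, hν, hgν⟩ := Set.mem_iUnion₂.mp (SH2 lam hlamΛ mu hmuΛ hgmem)
    exact ⟨ν, hν.1, hgν, m₁, hm₁, m₂, hm₂, le_trans hν.2 (add_le_add hle₁ hle₂)⟩
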